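/- Let Ψ̄ ∈ ℝ^{N×N}, S ∈ ℝ^{N×s}, λ, T > 0, and Q = Ψ̄S [(Ψ̄S)ᵀ(Ψ̄S)]† (Ψ̄S)ᵀ the orthogonal projection onto the column span of Ψ̄S. If (1/2)(Ψ̄Ψ̄ᵀ + (λ/T)I_N) ⪯ Ψ̄SSᵀΨ̄ᵀ + (λ/T)I_N, then I_N − Q ⪯ (2λ/T)(Ψ̄Ψ̄ᵀ + (λ/T)I_N)⁻¹. -/

import Mathlib

open Matrix

section Aux

variable {n : Type*} [Fintype n] [DecidableEq n]

private lemma herm_of_symm {A : Matrix n n ℝ} (h : Aᵀ = A) : A.IsHermitian := by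
  rw [Matrix.IsHermitian, conjTranspose_eq_transpose_of_trivial, h]

private lemma symm_of_herm {A : Matrix n n ℝ} (h : A.IsHermitian) : Aᵀ = A := by
  rw [Matrix.IsHermitian, conjTranspose_eq_transpose_of_trivial] at h
  exact h

private lemma psd_smul {A : Matrix n n ℝ} (hA : A.PosSemidef) {c : ℝ} (hc : 0 ≤ c) :
    (c • A).PosSemidef := by
  refine Matrix.PosSemidef.of_dotProduct_mulVec_nonneg ?_ (fun x => ?_)
  · apply herm_of_symm
    rw [transpose_smul, symm_of_herm hA.1]
  · rw [smul_mulVec, dotProduct_smul, smul_eq_mul]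
    exact mul_nonneg hc (hA.dotProduct_mulVec_nonneg x)

private lemma pd_smul {A : Matrix n n ℝ} (hA : A.PosDef) {c : ℝ} (hc : 0 < c) :
    (c • A).PosDef := by
  refine Matrix.PosDef.of_dotProduct_mulVec_pos ?_ (fun x hx => ?_)
  · apply herm_of_symm
    rw [transpose_smul, symm_of_herm hA.1]
  · rw [smul_mulVec, dotProduct_smul, smul_eq_mul]
    exact mul_pos hc (hA.dotProduct_mulVec_pos hx)

private lemma psd_conj {A : Matrix n n ℝ} (hA : A.PosSemidef) (V : Matrix n n ℝ) :
    (V * A * Vᵀ).PosSemidef := by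
  have := hA.mul_mul_conjTranspose_same V
  rwa [conjTranspose_eq_transpose_of_trivial] at this

private lemma pd_conj {A V : Matrix n n ℝ} (hA : A.PosDef) (hVs : Vᵀ = V)
    (hV : IsUnit V.det) : (V * A * V).PosDef := by
  refine Matrix.PosDef.of_dotProduct_mulVec_pos ?_ (fun x hx => ?_)
  · apply herm_of_symm
    simp [transpose_mul, hVs, symm_of_herm hA.1, Matrix.mul_assoc]
  · have hinj : Function.Injective (V.mulVec) := by
      rw [mulVec_injective_iff_isUnit, Matrix.isUnit_iff_isUnit_det]
      exact hV
    have hx' : V *ᵥ x ≠ 0 := by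
      intro h
      exact hx (hinj (by rw [h, mulVec_zero]))
    have h2 := hA.dotProduct_mulVec_pos hx'
    have e : star x ⬝ᵥ ((V * A * V) *ᵥ x) = star (V *ᵥ x) ⬝ᵥ (A *ᵥ (V *ᵥ x)) := by
      rw [star_trivial, star_trivial, ← mulVec_mulVec, ← mulVec_mulVec,
        dotProduct_mulVec, ← mulVec_transpose, hVs]
    rw [e]
    exact h2

open scoped MatrixOrder in
private lemma exists_sqrt {X : Matrix n n ℝ} (hX : X.PosDef) :
    ∃ V : Matrix n n ℝ, Vᵀ = V ∧ IsUnit V.det ∧ V * V = X⁻¹ ∧ V * X * V = 1 := by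
  have hXu : IsUnit X.det := isUnit_iff_ne_zero.mpr hX.det_pos.ne'
  have hXi : X⁻¹.PosDef := hX.inv
  set V := CFC.sqrt X⁻¹ with hVdef
  have hVV : V * V = X⁻¹ := CFC.sqrt_mul_sqrt_self X⁻¹ hXi.posSemidef.nonneg
  have hVs : Vᵀ = V := symm_of_herm (CFC.sqrt_nonneg X⁻¹).posSemidef.isHermitian
  have hVd : IsUnit V.det := by
    rw [isUnit_iff_ne_zero]
    intro h0
    have : V.det * V.det = (X⁻¹).det := by rw [← det_mul, hVV]
    rw [h0, mul_zero] at this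
    exact hXi.det_pos.ne' this.symm
  have hXX : X = V⁻¹ * V⁻¹ := by
    calc X = (X⁻¹)⁻¹ := (Matrix.nonsing_inv_nonsing_inv _ hXu).symm
    _ = (V * V)⁻¹ := by rw [hVV]
    _ = V⁻¹ * V⁻¹ := Matrix.mul_inv_rev V V
  refine ⟨V, hVs, hVd, hVV, ?_⟩
  rw [hXX, ← mul_assoc, Matrix.mul_nonsing_inv _ hVd, one_mul,
    Matrix.nonsing_inv_mul _ hVd]

private lemma inv_antitone {X Y : Matrix n n ℝ} (hX : X.PosDef) (hY : Y.PosDef)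
    (h : (Y - X).PosSemidef) : (X⁻¹ - Y⁻¹).PosSemidef := by
  obtain ⟨V, hVs, hVd, hVV, hVXV⟩ := exists_sqrt hX
  set Z := V * Y * V with hZdef
  have hZpd : Z.PosDef := pd_conj hY hVs hVd
  have hZ1 : (Z - 1).PosSemidef := by
    have hc := psd_conj h V
    rw [hVs] at hc
    have e : V * (Y - X) * V = Z - 1 := by
      rw [Matrix.mul_sub, Matrix.sub_mul, hVXV, hZdef]
    rwa [e] at hc
  obtain ⟨W, hWs, hWd, hWW, hWZW⟩ := exists_sqrt hZpd
  have h1 : ((1 : Matrix n n ℝ) - Z⁻¹).PosSemidef := by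
    have hc := psd_conj hZ1 W
    rw [hWs] at hc
    have e : W * (Z - 1) * W = 1 - Z⁻¹ := by
      rw [Matrix.mul_sub, Matrix.sub_mul, mul_one, hWZW, hWW]
    rwa [e] at hc
  have hfin : V * ((1 : Matrix n n ℝ) - Z⁻¹) * V = X⁻¹ - Y⁻¹ := by
    have hZinv : Z⁻¹ = V⁻¹ * (Y⁻¹ * V⁻¹) := by
      rw [hZdef, Matrix.mul_inv_rev, Matrix.mul_inv_rev]
    rw [Matrix.mul_sub, Matrix.sub_mul, mul_one, hVV, hZinv]
    congr 1
    rw [← mul_assoc, ← mul_assoc, Matrix.mul_nonsing_inv _ hVd, one_mul, mul_assoc,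
      Matrix.nonsing_inv_mul _ hVd, mul_one]
  have hc := psd_conj h1 V
  rw [hVs, hfin] at hc
  exact hc

end Aux

/-- If `(1/2)(Ψ̄Ψ̄ᵀ + (λ/T)I) ⪯ Ψ̄SSᵀΨ̄ᵀ + (λ/T)I`, then with
`Q = Ψ̄S[(Ψ̄S)ᵀ(Ψ̄S)]†(Ψ̄S)ᵀ` (orthogonal projection onto the column span of `Ψ̄S`,
`B` being the Moore–Penrose pseudoinverse of `(Ψ̄S)ᵀ(Ψ̄S)`),
`I − Q ⪯ (2λ/T)(Ψ̄Ψ̄ᵀ + (λ/T)I)⁻¹`. -/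
theorem stmt_10 {N s : ℕ} (Ψ : Matrix (Fin N) (Fin N) ℝ) (S : Matrix (Fin N) (Fin s) ℝ)
    (lam T : ℝ) (hlam : 0 < lam) (hT : 0 < T)
    (B : Matrix (Fin s) (Fin s) ℝ)
    (hB1 : (Ψ * S)ᵀ * (Ψ * S) * B * ((Ψ * S)ᵀ * (Ψ * S)) = (Ψ * S)ᵀ * (Ψ * S))
    (hB2 : B * ((Ψ * S)ᵀ * (Ψ * S)) * B = B)
    (hB3 : ((Ψ * S)ᵀ * (Ψ * S) * B)ᵀ = (Ψ * S)ᵀ * (Ψ * S) * B)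
    (hB4 : (B * ((Ψ * S)ᵀ * (Ψ * S)))ᵀ = B * ((Ψ * S)ᵀ * (Ψ * S)))
    (Q : Matrix (Fin N) (Fin N) ℝ) (hQ : Q = Ψ * S * B * (Ψ * S)ᵀ)
    (hlow : ((Ψ * S * Sᵀ * Ψᵀ + (lam / T) • 1) -
      (1 / 2 : ℝ) • (Ψ * Ψᵀ + (lam / T) • 1)).PosSemidef) :
    ((2 * lam / T) • (Ψ * Ψᵀ + (lam / T) • 1)⁻¹ -
      ((1 : Matrix (Fin N) (Fin N) ℝ) - Q)).PosSemidef := by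
  have hc0 : (0:ℝ) < lam / T := div_pos hlam hT
  set c : ℝ := lam / T with hc
  set M : Matrix (Fin N) (Fin N) ℝ := Ψ * S * Sᵀ * Ψᵀ with hM
  set C : Matrix (Fin N) (Fin s) ℝ := Ψ * S with hC
  set A : Matrix (Fin N) (Fin N) ℝ := Ψ * Ψᵀ + c • 1 with hA
  have hMCC : M = C * Cᵀ := by
    rw [hM, hC]; simp [Matrix.transpose_mul, Matrix.mul_assoc]
  -- key lemma: C * B * (Cᵀ * C) = C
  have hCtC : (Cᵀ * C) * (B * (Cᵀ * C) - 1) = 0 := by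
    have h' : Cᵀ * C * (B * (Cᵀ * C)) = Cᵀ * C := by rw [← Matrix.mul_assoc]; exact hB1
    rw [Matrix.mul_sub, mul_one, h', sub_self]
  have hK1 : C * B * (Cᵀ * C) = C := by
    have h0 : (C * (B * (Cᵀ * C) - 1))ᴴ * (C * (B * (Cᵀ * C) - 1)) = 0 := by
      rw [conjTranspose_mul, conjTranspose_eq_transpose_of_trivial C,
        Matrix.mul_assoc, ← Matrix.mul_assoc Cᵀ C (B * (Cᵀ * C) - 1), hCtC, Matrix.mul_zero]
    have hD := Matrix.conjTranspose_mul_self_eq_zero.mp h0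
    rw [Matrix.mul_sub, Matrix.mul_one, sub_eq_zero] at hD
    rw [Matrix.mul_assoc]; exact hD
  have hQC : Q * C = C := by
    rw [hQ, Matrix.mul_assoc (C * B)]; exact hK1
  have hQtEq : Qᵀ = C * Bᵀ * Cᵀ := by
    rw [hQ]; simp [Matrix.transpose_mul, Matrix.mul_assoc]
  have hQt : Qᵀ = Q := by
    have h1 : Q * Qᵀ = Qᵀ := by
      rw [hQtEq, ← Matrix.mul_assoc, ← Matrix.mul_assoc, hQC]
    have h2 : (Q * Qᵀ)ᵀ = Q * Qᵀ := by rw [transpose_mul, transpose_transpose]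
    have h3 : Q = Qᵀ :=
      calc Q = Qᵀᵀ := (transpose_transpose Q).symm
      _ = (Q * Qᵀ)ᵀ := by rw [h1]
      _ = Q * Qᵀ := h2
      _ = Qᵀ := h1
    exact h3.symm
  have hQ' : Q = C * B * Cᵀ := hQ
  have hQQ : Q * Q = Q := by
    nth_rewrite 2 [hQ']
    rw [← Matrix.mul_assoc, ← Matrix.mul_assoc, hQC, ← hQ']
  have hMt : Mᵀ = M := by
    rw [hMCC, transpose_mul, transpose_transpose]
  have hQM : Q * M = M := by rw [hMCC, ← Matrix.mul_assoc, hQC]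
  have hMQ : M * Q = M := by
    have h := congrArg Matrix.transpose hQM
    rw [transpose_mul, hMt, hQt] at h
    exact h
  -- positivity
  have hMpsd : M.PosSemidef := by
    rw [hMCC]
    have := Matrix.posSemidef_self_mul_conjTranspose C
    rwa [conjTranspose_eq_transpose_of_trivial] at this
  have hPPpsd : (Ψ * Ψᵀ).PosSemidef := by
    have := Matrix.posSemidef_self_mul_conjTranspose Ψ
    rwa [conjTranspose_eq_transpose_of_trivial] at this
  have hcI : ((c : ℝ) • (1 : Matrix (Fin N) (Fin N) ℝ)).PosDef :=
    pd_smul Matrix.PosDef.one hc0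
  have hApd : A.PosDef := Matrix.PosDef.posSemidef_add hPPpsd hcI
  set Mc : Matrix (Fin N) (Fin N) ℝ := M + c • 1 with hMcdef
  have hMcpd : Mc.PosDef := Matrix.PosDef.posSemidef_add hMpsd hcI
  have hMcu : IsUnit Mc.det := isUnit_iff_ne_zero.mpr hMcpd.det_pos.ne'
  have hMcinv : Mc * Mc⁻¹ = 1 := Matrix.mul_nonsing_inv _ hMcu
  have hinvMc : Mc⁻¹ * Mc = 1 := Matrix.nonsing_inv_mul _ hMcu
  have hdecomp : M * Mc⁻¹ + c • Mc⁻¹ = 1 := by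
    rw [← hMcinv, hMcdef, Matrix.add_mul, Matrix.smul_mul, one_mul]
  -- Q commutes with Mc⁻¹
  have hQMcC : Q * Mc = Mc * Q := by
    rw [hMcdef, Matrix.mul_add, Matrix.add_mul, hQM, hMQ, Matrix.mul_smul,
      Matrix.smul_mul, mul_one, one_mul]
  have hQMc : Q * Mc⁻¹ = Mc⁻¹ * Q := by
    have e1 : Mc⁻¹ * (Q * Mc) * Mc⁻¹ = Q * Mc⁻¹ := by
      rw [hQMcC, ← mul_assoc, hinvMc, one_mul]
    have e2 : Mc⁻¹ * (Q * Mc) * Mc⁻¹ = Mc⁻¹ * Q := by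
      rw [← mul_assoc Mc⁻¹ Q Mc, mul_assoc (Mc⁻¹ * Q), hMcinv, mul_one]
    exact e1.symm.trans e2
  have hMcIpsd : Mc⁻¹.PosSemidef := hMcpd.posSemidef.inv
  -- step 4 : c • Mc⁻¹ - (1 - Q) psd
  have hconj : (Q * (c • Mc⁻¹) * Qᵀ).PosSemidef := psd_conj (psd_smul hMcIpsd hc0.le) Q
  have hd' : c • Mc⁻¹ = 1 - M * Mc⁻¹ := eq_sub_of_add_eq' hdecomp
  have hMMcQ : M * Mc⁻¹ * Q = M * Mc⁻¹ := by
    rw [mul_assoc, ← hQMc, ← mul_assoc, hMQ]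
  have hkey : Q * (c • Mc⁻¹) * Qᵀ = c • Mc⁻¹ - (1 - Q) := by
    rw [hQt]
    have l1 : Q * (c • Mc⁻¹) * Q = c • (Mc⁻¹ * Q) := by
      rw [Matrix.mul_smul, Matrix.smul_mul, hQMc, mul_assoc, hQQ]
    rw [l1]
    calc c • (Mc⁻¹ * Q) = (c • Mc⁻¹) * Q := by rw [Matrix.smul_mul]
    _ = (1 - M * Mc⁻¹) * Q := by rw [hd']
    _ = Q - M * Mc⁻¹ * Q := by rw [Matrix.sub_mul, one_mul]
    _ = Q - M * Mc⁻¹ := by rw [hMMcQ]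
    _ = c • Mc⁻¹ - (1 - Q) := by rw [hd']; abel
  have P2 : (c • Mc⁻¹ - ((1 : Matrix (Fin N) (Fin N) ℝ) - Q)).PosSemidef := by
    rw [← hkey]; exact hconj
  -- step 3 : inverse antitonicity
  have hhalf : ((1/2 : ℝ) • A).PosDef := pd_smul hApd (by norm_num)
  have P1 : (((1/2 : ℝ) • A)⁻¹ - Mc⁻¹).PosSemidef := inv_antitone hhalf hMcpd hlow
  have hAu : IsUnit A.det := isUnit_iff_ne_zero.mpr hApd.det_pos.ne'
  have hsc : ((1/2 : ℝ) • A)⁻¹ = (2 : ℝ) • A⁻¹ := by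
    apply Matrix.inv_eq_left_inv
    rw [Matrix.smul_mul, Matrix.mul_smul, smul_smul, Matrix.nonsing_inv_mul _ hAu]
    norm_num
  rw [hsc] at P1
  have hfinal : (2 * lam / T) • A⁻¹ - ((1 : Matrix (Fin N) (Fin N) ℝ) - Q) =
      c • ((2 : ℝ) • A⁻¹ - Mc⁻¹) + (c • Mc⁻¹ - ((1 : Matrix (Fin N) (Fin N) ℝ) - Q)) := by
    rw [smul_sub, smul_smul]
    have hcc : c * 2 = 2 * lam / T := by rw [hc]; ring
    rw [hcc]
    abel
  rw [hfinal]
  exact (psd_smul P1 hc0.le).add P2
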